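/- arXiv:1508.02929 — 6 statements merged into one kernel-verified Lean document; each statement's English description precedes it below -/
import Mathlib

section
/- Let K be an arbitrary field and let n ≥ 3. If A is a proper subalgebra of the algebra K^{n,n} of n × n matrices over K (i.e., a K-linear subspace of K^{n,n} that is closed under matrix multiplication and with A ≠ K^{n,n}), then dim(A) ≤ n² − 2, where dim(A) denotes the dimension of A as a vector space over K. -/
open Module LinearMap Matrix

theorem stmt_0 (K : Type*) [Field K] (n : ℕ) (hn : 3 ≤ n)
    (A : Submodule K (Matrix (Fin n) (Fin n) K))
    (hmul : ∀ x ∈ A, ∀ y ∈ A, x * y ∈ A)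
    (hproper : A ≠ ⊤) :
    Module.finrank K A ≤ n ^ 2 - 2 := by
  classical
  have hV : Module.finrank K (Matrix (Fin n) (Fin n) K) = n ^ 2 := by
    rw [Module.finrank_matrix]
    simp [sq]
  by_contra hcon
  push_neg at hcon
  have hle : Module.finrank K A ≤ n ^ 2 := hV ▸ A.finrank_le
  have hne_top : Module.finrank K A ≠ n ^ 2 := by
    intro h
    exact hproper (Submodule.eq_top_of_finrank_eq (by rw [h, hV]))
  have hn2 : 9 ≤ n ^ 2 := by nlinarith
  have hA1 : Module.finrank K A = n ^ 2 - 1 := by omega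
  -- get x0 ∉ A
  obtain ⟨x0, hx0⟩ : ∃ x0, x0 ∉ A := by
    by_contra h
    push_neg at h
    exact hproper (Submodule.eq_top_iff'.mpr h)
  have hq0 : A.mkQ x0 ≠ 0 := by
    simpa [Submodule.Quotient.mk_eq_zero] using hx0
  obtain ⟨g, hg⟩ : ∃ g : Module.Dual K (Matrix (Fin n) (Fin n) K ⧸ A), g (A.mkQ x0) ≠ 0 := by
    by_contra h
    push_neg at h
    exact hq0 ((Module.forall_dual_apply_eq_zero_iff K _).mp h)
  set f : Matrix (Fin n) (Fin n) K →ₗ[K] K := g.comp A.mkQ with hf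
  have hfx0 : f x0 ≠ 0 := hg
  have hAle : A ≤ LinearMap.ker f := by
    intro x hx
    simp [hf, (Submodule.Quotient.mk_eq_zero A).mpr hx]
  have hkerf : Module.finrank K (LinearMap.ker f) = n ^ 2 - 1 := by
    have h1 := f.finrank_range_add_finrank_ker
    rw [hV] at h1
    have hr : Module.finrank K (LinearMap.range f) = 1 := by
      have hle1 : Module.finrank K (LinearMap.range f) ≤ 1 := by
        simpa using (LinearMap.range f).finrank_le
      have hpos : 0 < Module.finrank K (LinearMap.range f) := by
        rw [Module.finrank_pos_iff_exists_ne_zero]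
        exact ⟨⟨f x0, x0, rfl⟩, by simpa [Subtype.ext_iff] using hfx0⟩
      omega
    omega
  have hAker : A = LinearMap.ker f :=
    Submodule.eq_of_le_of_finrank_le hAle (by rw [hkerf, hA1])
  have hmem : ∀ x, f x = 0 ↔ x ∈ A := by
    intro x; rw [hAker]; exact (LinearMap.mem_ker).symm
  have hfmul : ∀ x y, f x = 0 → f y = 0 → f (x * y) = 0 := fun x y hx hy =>
    (hmem _).mpr (hmul x ((hmem x).mp hx) y ((hmem y).mp hy))
  set e := (f x0)⁻¹ • x0 with he_def
  have he : f e = 1 := by simp [he_def, inv_mul_cancel₀ hfx0]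
  have key : ∀ x y, f (x * y) = f x * f (e * y) + f (x * e) * f y - f x * f y * f (e * e) := by
    intro x y
    have h1 : f (x - f x • e) = 0 := by simp [he]
    have h2 : f (y - f y • e) = 0 := by simp [he]
    have h3 := hfmul _ _ h1 h2
    simp only [sub_mul, mul_sub, smul_mul_assoc, mul_smul_comm, smul_smul, map_sub,
      _root_.map_smul, smul_eq_mul] at h3
    linear_combination h3
  set E : Fin n → Fin n → Matrix (Fin n) (Fin n) K := fun i j => Matrix.single i j 1 with hE
  obtain ⟨p, q, hpq⟩ : ∃ p q, f (E p q) ≠ 0 := by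
    by_contra h
    push_neg at h
    apply hfx0
    have hx0e : x0 = ∑ i, ∑ j, x0 i j • E i j := by
      conv_lhs => rw [matrix_eq_sum_single x0]
      refine Finset.sum_congr rfl fun i _ => Finset.sum_congr rfl fun j _ => ?_
      rw [hE, Matrix.smul_single, smul_eq_mul, mul_one]
    rw [hx0e]
    simp [h]
  set c : Fin n → Fin n → K := fun i j => f (E i j) with hc
  set H : Fin n → Fin n → K := fun i j => f (E i j * e) with hH
  set al : Fin n → K := fun l => f (e * E l q) - f (e * e) * c l q with hal
  have P : ∀ (l i j : Fin n),
      (if j = l then c i q else 0) = al l * c i j + c l q * H i j := by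
    intro l i j
    have hk := key (E i j) (E l q)
    by_cases hjl : j = l
    · subst hjl
      rw [show E i j * E j q = E i q by simp only [hE]; rw [Matrix.single_mul_single_same 1 i j q 1, one_mul]] at hk
      rw [if_pos rfl]
      simp only [hc, hal, hH]
      linear_combination hk
    · rw [show E i j * E l q = 0 by simp only [hE]; exact Matrix.single_mul_single_of_ne 1 i j l hjl 1] at hk
      simp only [map_zero] at hk
      rw [if_neg hjl]
      simp only [hc, hal, hH]
      linear_combination hk
  have h3n : (3:ℕ) ≤ n := hn
  set l0 : Fin n := ⟨0, by omega⟩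
  set l1 : Fin n := ⟨1, by omega⟩
  set l2 : Fin n := ⟨2, by omega⟩
  have h10 : l1 ≠ l0 := by simp [l0, l1, Fin.ext_iff]
  have h20 : l2 ≠ l0 := by simp [l0, l2, Fin.ext_iff]
  have h21 : l2 ≠ l1 := by simp [l1, l2, Fin.ext_iff]
  have e1 := P l0 p l1; rw [if_neg h10] at e1
  have e2 := P l0 p l2; rw [if_neg h20] at e2
  have e3 := P l1 p l2; rw [if_neg h21] at e3
  have e4 := P l1 p l1; rw [if_pos rfl] at e4
  have e5 := P l0 p l0; rw [if_pos rfl] at e5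
  have e6 := P l2 p l2; rw [if_pos rfl] at e6
  set D := al l0 * c l1 q - al l1 * c l0 q with hDdef
  have hDc : D * c p l2 = 0 := by linear_combination (-(c l1 q)) * e2 + (c l0 q) * e3
  have hDh : D * H p l2 = 0 := by linear_combination (al l1) * e2 + (-(al l0)) * e3
  rcases eq_or_ne D 0 with hD0 | hD0
  · have hA0 : al l0 * c p q = 0 := by
      linear_combination (al l0) * e4 + (-(al l1)) * e1 + (H p l1) * hD0
    have hB0 : c l0 q * c p q = 0 := by
      linear_combination (c l0 q) * e4 + (-(c l1 q)) * e1 + (-(c p l1)) * hD0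
    have hA0' : al l0 = 0 := by
      rcases mul_eq_zero.mp hA0 with h | h
      · exact h
      · exact absurd h hpq
    have hB0' : c l0 q = 0 := by
      rcases mul_eq_zero.mp hB0 with h | h
      · exact h
      · exact absurd h hpq
    rw [hA0', hB0', zero_mul, zero_mul, add_zero] at e5
    exact hpq e5
  · have hc2 : c p l2 = 0 := by
      rcases mul_eq_zero.mp hDc with h | h
      · exact absurd h hD0
      · exact h
    have hh2 : H p l2 = 0 := by
      rcases mul_eq_zero.mp hDh with h | h
      · exact absurd h hD0
      · exact h
    rw [hc2, hh2, mul_zero, mul_zero, add_zero] at e6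
    exact hpq e6
end

section
/- Let K be an arbitrary field and let n ≥ 3. If A is a K-linear subspace of the matrix algebra K^{n,n} that is closed under matrix multiplication and dim(A) ≥ n² − 1, then A = K^{n,n}. -/
open Matrix Module

theorem stmt_2 (K : Type*) [Field K] (n : ℕ) (hn : 3 ≤ n)
    (A : Submodule K (Matrix (Fin n) (Fin n) K))
    (hmul : ∀ x ∈ A, ∀ y ∈ A, x * y ∈ A)
    (hdim : n ^ 2 - 1 ≤ Module.finrank K A) :
    A = ⊤ := by
  by_contra hA
  have hlt : A < ⊤ := lt_top_iff_ne_top.mpr hA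
  obtain ⟨f, hf0, hfker⟩ := A.exists_dual_map_eq_bot_of_lt_top hlt inferInstance
  have hAker : A ≤ LinearMap.ker f := fun x hx => by
    have : f x ∈ A.map f := ⟨x, hx, rfl⟩
    rwa [hfker, Submodule.mem_bot] at this
  have hM : finrank K (Matrix (Fin n) (Fin n) K) = n ^ 2 := by
    rw [Module.finrank_matrix]; simp [sq]
  obtain ⟨z, hz⟩ : ∃ z, f z ≠ 0 := by
    by_contra h; push_neg at h; exact hf0 (LinearMap.ext fun x => h x)
  have hrange : LinearMap.range f = ⊤ := by
    rw [eq_top_iff]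
    rintro c -
    exact ⟨(c / f z) • z, by rw [map_smul, smul_eq_mul, div_mul_cancel₀ c hz]⟩
  have hker : finrank K (LinearMap.ker f) = n ^ 2 - 1 := by
    have h1 := LinearMap.finrank_range_add_finrank_ker f
    rw [hrange, finrank_top, Module.finrank_self, hM] at h1
    omega
  have hA' : A = LinearMap.ker f :=
    Submodule.eq_of_le_of_finrank_le hAker (by rw [hker]; exact hdim)
  set e := (f z)⁻¹ • z with he
  have hfe : f e = 1 := by simp [he, LinearMap.map_smul, inv_mul_cancel₀ hz]
  have key : ∀ x y, f (x * y) =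
      f x * (f (e * y) - f (e * e) * f y) + f (x * e) * f y := by
    intro x y
    have hx : x - f x • e ∈ A := by
      rw [hA']; simp [LinearMap.mem_ker, map_sub, LinearMap.map_smul, hfe]
    have hy : y - f y • e ∈ A := by
      rw [hA']; simp [LinearMap.mem_ker, map_sub, LinearMap.map_smul, hfe]
    have h0 : f ((x - f x • e) * (y - f y • e)) = 0 := by
      have := hmul _ hx _ hy
      rw [hA', LinearMap.mem_ker] at this; exact this
    simp only [sub_mul, mul_sub, smul_mul_assoc, mul_smul_comm, map_sub, LinearMap.map_smul,
      smul_eq_mul] at h0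
    linear_combination h0
  obtain ⟨j, p, hjp⟩ : ∃ j p, f (single j p (1:K)) ≠ 0 := by
    by_contra h; push_neg at h
    apply hz
    conv_lhs => rw [matrix_eq_sum_single z]
    rw [map_sum]
    refine Finset.sum_eq_zero fun i _ => ?_
    rw [map_sum]
    refine Finset.sum_eq_zero fun k _ => ?_
    have : single i k (z i k) = z i k • single i k (1:K) := by
      rw [smul_single, smul_eq_mul, mul_one]
    rw [this, LinearMap.map_smul, h i k, smul_zero]
  set ι : Fin 3 → Fin n := Fin.castLE hn with hι'
  have hι : Function.Injective ι := Fin.castLE_injective hn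
  set u : Fin 3 → Fin 2 → K := fun i =>
    ![f (single j (ι i) 1), f (single j (ι i) 1 * e)] with hu
  have hdep : ¬ LinearIndependent K u := by
    intro h
    have := h.fintype_card_le_finrank
    simp [Module.finrank_pi] at this
  obtain ⟨g, hsum, i₀, hi₀⟩ := Fintype.not_linearIndependent_iff.mp hdep
  have h1 : ∑ i, g i * f (single j (ι i) 1) = 0 := by
    have := congrFun hsum 0
    simpa [hu, Finset.sum_apply] using this
  have h2 : ∑ i, g i * f (single j (ι i) 1 * e) = 0 := by
    have := congrFun hsum 1
    simpa [hu, Finset.sum_apply] using this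
  set Y := single (ι i₀) p (1:K) with hY
  set α := f (e * Y) - f (e * e) * f Y with hα
  have hLHS : ∀ i : Fin 3, f (single j (ι i) 1 * Y)
      = if i = i₀ then f (single j p 1) else 0 := by
    intro i
    by_cases h : i = i₀
    · subst h
      rw [if_pos rfl, hY, Matrix.single_mul_single_same, one_mul]
    · rw [if_neg h, hY, Matrix.single_mul_single_of_ne (h := fun hc => h (hι hc)), map_zero]
  have hz0 : g i₀ * f (single j p 1) = 0 := by
    calc g i₀ * f (single j p 1)
        = ∑ i : Fin 3, g i * (if i = i₀ then f (single j p 1) else 0) := by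
          simp [mul_ite, mul_zero, Finset.sum_ite_eq']
      _ = ∑ i : Fin 3, g i * f (single j (ι i) 1 * Y) := by
          refine Finset.sum_congr rfl fun i _ => ?_
          rw [hLHS i]
      _ = ∑ i : Fin 3, (g i * f (single j (ι i) 1) * α
            + g i * f (single j (ι i) 1 * e) * f Y) := by
          refine Finset.sum_congr rfl fun i _ => ?_
          rw [key]; ring
      _ = (∑ i : Fin 3, g i * f (single j (ι i) 1)) * α
            + (∑ i : Fin 3, g i * f (single j (ι i) 1 * e)) * f Y := by
          rw [Finset.sum_add_distrib, Finset.sum_mul, Finset.sum_mul]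
      _ = 0 := by rw [h1, h2]; ring
  exact hjp ((mul_eq_zero.mp hz0).resolve_left hi₀)
end

section
/- Let K be an arbitrary field, let n ≥ 3, and let f : K^{n,n} → K be a K-linear functional such that the kernel of f is closed under matrix multiplication (i.e., f(A) = 0 and f(B) = 0 imply f(A·B) = 0). Then f = 0. -/
theorem stmt_3 (K : Type*) [Field K] (n : ℕ) (hn : 3 ≤ n)
    (f : Matrix (Fin n) (Fin n) K →ₗ[K] K)
    (hker : ∀ A B : Matrix (Fin n) (Fin n) K, f A = 0 → f B = 0 → f (A * B) = 0) :
    f = 0 := by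
  set E : Fin n → Fin n → Matrix (Fin n) (Fin n) K :=
    fun i j => Matrix.single i j 1 with hE
  -- off-diagonal vanish
  have hoff : ∀ i j : Fin n, i ≠ j → f (E i j) = 0 := by
    intro i j hij
    by_contra hc
    -- find k distinct from i, j
    obtain ⟨k, hk⟩ : ∃ k : Fin n, k ∉ ({i, j} : Finset (Fin n)) := by
      by_contra h
      push_neg at h
      have := Finset.card_le_card (fun x _ => h x : (Finset.univ : Finset (Fin n)) ⊆ {i, j})
      have h2 : ({i, j} : Finset (Fin n)).card ≤ 2 :=
        (Finset.card_insert_le _ _).trans (by simp)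
      simp only [Finset.card_univ, Fintype.card_fin] at this
      omega
    simp only [Finset.mem_insert, Finset.mem_singleton, not_or] at hk
    obtain ⟨hki, hkj⟩ := hk
    set c := f (E i j) with hcdef
    set A := E i k + (-(f (E i k)) / c) • E i j with hA
    set B := E k j + (-(f (E k j)) / c) • E i j with hB
    have hfA : f A = 0 := by
      simp only [hA, map_add, map_smul, smul_eq_mul]
      field_simp
      rw [← hcdef]; ring
    have hfB : f B = 0 := by
      simp only [hB, map_add, map_smul, smul_eq_mul]
      field_simp
      rw [← hcdef]; ring
    have hAB : A * B = E i j := by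
      simp only [hA, hB, hE, add_mul, mul_add, Matrix.smul_mul, Matrix.mul_smul,
        Matrix.single_mul_single_same,
        Matrix.single_mul_single_of_ne _ _ _ _ hki,
        Matrix.single_mul_single_of_ne _ _ _ _ (Ne.symm hkj),
        Matrix.single_mul_single_of_ne _ _ _ _ (Ne.symm hij)]
      simp
    have := hker A B hfA hfB
    rw [hAB] at this
    exact hc this
  -- diagonal vanish
  have hdiag : ∀ i : Fin n, f (E i i) = 0 := by
    intro i
    obtain ⟨j, hj⟩ : ∃ j : Fin n, j ≠ i := by
      have : 1 < Fintype.card (Fin n) := by simp; omega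
      exact Fintype.exists_ne_of_one_lt_card this i
    have h1 : E i j * E j i = E i i := by
      simp [hE, Matrix.single_mul_single_same]
    have := hker (E i j) (E j i) (hoff i j (Ne.symm hj)) (hoff j i hj)
    rwa [h1] at this
  have hall : ∀ i j : Fin n, f (E i j) = 0 := by
    intro i j
    rcases eq_or_ne i j with rfl | h
    · exact hdiag i
    · exact hoff i j h
  ext A
  have hrep := Matrix.matrix_eq_sum_single A
  have hsm : ∀ i j : Fin n, Matrix.single i j (A i j) = A i j • E i j := by
    intro i j; simp [hE]
  have : f A = 0 := by
    conv_lhs => rw [hrep]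
    rw [map_sum]
    simp only [hsm, map_sum, map_smul, hall, smul_zero, Finset.sum_const_zero]
  simpa using this
end

section
/- Let K be an arbitrary field, let n ≥ 3, and let f : K^{n,n} → K be a K-linear functional such that the kernel of f is closed under matrix multiplication. Then f(E_{ij}) = 0 for all indices i ≠ j, where E_{ij} denotes the matrix unit with entry 1 in position (i,j) and 0 elsewhere. -/
theorem stmt_4 (K : Type*) [Field K] (n : ℕ) (hn : 3 ≤ n)
    (f : Matrix (Fin n) (Fin n) K →ₗ[K] K)
    (hker : ∀ A B : Matrix (Fin n) (Fin n) K, f A = 0 → f B = 0 → f (A * B) = 0) :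
    ∀ i j : Fin n, i ≠ j → f (Matrix.single i j (1 : K)) = 0 := by
  intro i j hij
  -- find k distinct from i and j
  obtain ⟨k, hk⟩ : ∃ k : Fin n, k ∉ ({i, j} : Finset (Fin n)) := by
    have hcard : ({i, j} : Finset (Fin n)).card < Fintype.card (Fin n) := by
      have h1 : ({i, j} : Finset (Fin n)).card ≤ 2 :=
        (Finset.card_insert_le _ _).trans (by simp)
      simp only [Fintype.card_fin]
      omega
    have : (({i, j} : Finset (Fin n))ᶜ).Nonempty := by
      rw [← Finset.card_pos, Finset.card_compl]
      omega
    obtain ⟨k, hk⟩ := this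
    exact ⟨k, Finset.mem_compl.mp hk⟩
  simp only [Finset.mem_insert, Finset.mem_singleton, not_or] at hk
  obtain ⟨hki, hkj⟩ := hk
  set E : Fin n → Fin n → Matrix (Fin n) (Fin n) K := fun p q => Matrix.single p q 1 with hE
  set x := f (E i j) with hx
  set a := f (E i k) with ha
  set b := f (E k j) with hb
  by_contra hx0
  -- products of basis matrices
  have hik_kj : E i k * E k j = E i j := by
    simp [hE, Matrix.single_mul_single_same]
  have hik_ik : E i k * E i k = 0 := Matrix.single_mul_single_of_ne _ _ _ _ hki _
  have hkj_ik : E k j * E i k = 0 := Matrix.single_mul_single_of_ne _ _ _ _ (Ne.symm hij) _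
  have hkj_kj : E k j * E k j = 0 := Matrix.single_mul_single_of_ne _ _ _ _ (Ne.symm hkj) _
  have hik_ij : E i k * E i j = 0 := Matrix.single_mul_single_of_ne _ _ _ _ hki _
  have hij_kj : E i j * E k j = 0 := Matrix.single_mul_single_of_ne _ _ _ _ (Ne.symm hkj) _
  -- step 1 : a * b = 0
  have hab : a * b = 0 := by
    set A : Matrix (Fin n) (Fin n) K := b • E i k - a • E k j with hA
    have hfA : f A = 0 := by
      simp [hA, map_sub, map_smul, ← ha, ← hb, mul_comm]
    have hAA : A * A = -((b * a) • E i j) := by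
      simp only [hA, sub_mul, mul_sub, smul_mul_smul_comm, hik_ik, hik_kj, hkj_ik, hkj_kj,
        smul_zero, zero_sub, sub_zero, smul_neg]
    have := hker A A hfA hfA
    rw [hAA] at this
    simp only [map_neg, map_smul, neg_eq_zero, smul_eq_mul, ← hx] at this
    rcases mul_eq_zero.mp this with h | h
    · rw [mul_comm b a] at h; exact h
    · exact absurd h hx0
  rcases mul_eq_zero.mp hab with ha0 | hb0
  · -- a = 0 : take A₁ = E i k, A₂ = E k j - (b * x⁻¹) • E i j
    have hfA2 : f (E k j - (b * x⁻¹) • E i j) = 0 := by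
      simp only [map_sub, map_smul, ← hb, ← hx, smul_eq_mul]
      field_simp
      simp
    have := hker (E i k) (E k j - (b * x⁻¹) • E i j) ha0 hfA2
    rw [mul_sub, hik_kj, Matrix.mul_smul, hik_ij, smul_zero, sub_zero] at this
    exact hx0 this
  · -- b = 0 : take A₁ = E i k - (a * x⁻¹) • E i j, A₂ = E k j
    have hfA1 : f (E i k - (a * x⁻¹) • E i j) = 0 := by
      simp only [map_sub, map_smul, ← ha, ← hx, smul_eq_mul]
      field_simp
      simp
    have := hker (E i k - (a * x⁻¹) • E i j) (E k j) hfA1 hb0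
    rw [sub_mul, hik_kj, Matrix.smul_mul, hij_kj, smul_zero, sub_zero] at this
    exact hx0 this
end

section
/- Let K be an algebraically closed field, n ≥ 1, and let A be an irreducible unital K-subalgebra of K^{n,n}, meaning that the only K-linear subspaces U ⊆ K^n with M·U ⊆ U for all M ∈ A are {0} and K^n. Then A = K^{n,n}. -/
set_option maxHeartbeats 1000000
set_option synthInstance.maxHeartbeats 400000

open Module LinearMap Submodule

section Burnside

variable {K : Type*} [Field K] [IsAlgClosed K] {n : ℕ}

/-- Burnside's theorem at the level of endomorphism algebras of `Fin n → K`. -/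
theorem burnside_end (hn : 1 ≤ n) (B : Subalgebra K (Module.End K (Fin n → K)))
    (hirr : ∀ U : Submodule K (Fin n → K),
      (∀ f ∈ B, ∀ u ∈ U, f u ∈ U) → U = ⊥ ∨ U = ⊤) : B = ⊤ := by
  set V := (Fin n → K) with hV
  haveI : Nonempty (Fin n) := ⟨⟨0, hn⟩⟩
  haveI : Nontrivial V := Function.nontrivial
  -- the evaluation map at `v`
  let ev : V → (B →ₗ[K] V) := fun v =>
    { toFun := fun f => (f : Module.End K V) v
      map_add' := fun f g => rfl
      map_smul' := fun c f => rfl }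
  -- orbit surjectivity: for `v ≠ 0`, `B v = V`
  have orbit : ∀ v : V, v ≠ 0 → ∀ w : V, ∃ f ∈ B, f v = w := by
    intro v hv w
    have hinv : ∀ f ∈ B, ∀ u ∈ LinearMap.range (ev v), f u ∈ LinearMap.range (ev v) := by
      rintro f hf u ⟨⟨g, hg⟩, rfl⟩
      exact ⟨⟨f * g, B.mul_mem hf hg⟩, rfl⟩
    rcases hirr _ hinv with h | h
    · exfalso
      have : v ∈ LinearMap.range (ev v) := ⟨⟨1, B.one_mem⟩, by simp [ev]⟩
      rw [h] at this
      exact hv (by simpa using this)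
    · have : w ∈ LinearMap.range (ev v) := h ▸ mem_top
      rcases this with ⟨⟨f, hf⟩, hfw⟩
      exact ⟨f, hf, hfw⟩
  -- there exists a nonzero element of minimal rank, and it has rank one
  have hone : (1 : Module.End K V) ≠ 0 := by
    obtain ⟨v, hv⟩ := exists_ne (0 : V)
    intro h
    exact hv (by simpa using LinearMap.congr_fun h v)
  set s : Set ℕ := {r | ∃ T ∈ B, T ≠ 0 ∧ finrank K (LinearMap.range T) = r} with hs
  have hsne : s.Nonempty := ⟨_, 1, B.one_mem, hone, rfl⟩
  obtain ⟨T, hTB, hT0, hTr⟩ := Nat.sInf_mem hsne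
  set r : ℕ := sInf s with hrdef
  have hrmin : ∀ m ∈ s, r ≤ m := fun m hm => Nat.sInf_le hm
  -- the minimal rank is 1
  have hr1 : r = 1 := by
    by_contra hne
    have hrpos : 0 < r := by
      rw [← hTr]
      rw [Module.finrank_pos_iff, Submodule.nontrivial_iff_ne_bot]
      simpa [LinearMap.range_eq_bot] using hT0
    have hr2 : 2 ≤ r := by omega
    -- find x₁ with `T x₁ ≠ 0` and x₂ with `T x₂ ∉ span {T x₁}`
    obtain ⟨x₁, hx₁⟩ : ∃ x, T x ≠ 0 := by
      by_contra h
      push_neg at h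
      exact hT0 (LinearMap.ext fun x => h x)
    obtain ⟨x₂, hx₂⟩ : ∃ x, T x ∉ span K {T x₁} := by
      by_contra h
      push_neg at h
      have hle : LinearMap.range T ≤ span K {T x₁} := by
        rintro _ ⟨x, rfl⟩; exact h x
      have := Submodule.finrank_mono hle
      rw [hTr] at this
      have h1 : finrank K (span K {T x₁}) = 1 := finrank_span_singleton hx₁
      omega
    obtain ⟨S, hSB, hSx⟩ := orbit (T x₁) hx₁ x₂
    set R := LinearMap.range T with hR
    haveI : Nontrivial R := by
      rw [Submodule.nontrivial_iff_ne_bot]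
      intro hb
      exact hT0 (LinearMap.range_eq_bot.mp hb)
    -- restrict `T ∘ S` to an endomorphism of `R` and take an eigenvalue
    have hmem : ∀ x ∈ R, (T ∘ₗ S) x ∈ R := fun x _ => LinearMap.mem_range_self T (S x)
    set g : Module.End K R := (T ∘ₗ S).restrict hmem with hg
    obtain ⟨μ, hμ⟩ := Module.End.exists_eigenvalue g
    obtain ⟨w, hw⟩ := hμ.exists_hasEigenvector
    have hgw : g w = μ • w := hw.apply_eq_smul
    set T₁ : Module.End K V := T * S * T - μ • T with hT₁def
    have hT₁B : T₁ ∈ B := B.sub_mem (B.mul_mem (B.mul_mem hTB hSB) hTB) (B.smul_mem hTB μ)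
    have hT₁app : ∀ x, T₁ x = T (S (T x)) - μ • T x := fun x => rfl
    have hT₁0 : T₁ ≠ 0 := by
      intro h
      have h1 : T₁ x₁ = 0 := by rw [h]; rfl
      rw [hT₁app, hSx] at h1
      apply hx₂
      have : T x₂ = μ • T x₁ := by
        have := sub_eq_zero.mp h1
        exact this
      rw [this]
      exact Submodule.smul_mem _ μ (Submodule.mem_span_singleton_self _)
    -- `T₁` factors through `h := g - μ • 1`, which has nontrivial kernel
    set h : Module.End K R := g - μ • (1 : Module.End K R) with hh
    have hker : w ∈ LinearMap.ker h := by
      simp only [hh, LinearMap.mem_ker, LinearMap.sub_apply, LinearMap.smul_apply,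
        Module.End.one_apply, hgw, sub_self]
    have hkerpos : 0 < finrank K (LinearMap.ker h) := by
      refine (Module.finrank_pos_iff (R := K) (M := LinearMap.ker h)).mpr ?_; rw [Submodule.nontrivial_iff_ne_bot]
      intro hbot
      rw [hbot] at hker
      exact hw.right (by simpa using hker)
    have hrank_lt : finrank K (LinearMap.range h) < r := by
      have := LinearMap.finrank_range_add_finrank_ker h
      have hRr : finrank K R = r := hTr
      omega
    have hfact : T₁ = R.subtype ∘ₗ h ∘ₗ T.rangeRestrict := by
      apply LinearMap.ext
      intro x
      simp only [LinearMap.comp_apply, Submodule.subtype_apply, hh, LinearMap.sub_apply,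
        LinearMap.smul_apply, Module.End.one_apply]
      have : (g (T.rangeRestrict x) : V) = T (S (T x)) := by
        rw [hg, LinearMap.restrict_apply]
        rfl
      rw [hT₁app]
      push_cast [this]
      rfl
    have hle : LinearMap.range T₁ ≤ LinearMap.range (R.subtype ∘ₗ h) := by
      rw [hfact, ← LinearMap.comp_assoc]
      exact LinearMap.range_comp_le_range _ _
    have hrank₁ : finrank K (LinearMap.range T₁) < r := by
      have h1 := Submodule.finrank_mono hle
      have h2 : finrank K (LinearMap.range (R.subtype ∘ₗ h)) = finrank K (LinearMap.range h) := by
        rw [LinearMap.range_comp]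
        exact Submodule.finrank_map_subtype_eq R _
      exact lt_of_le_of_lt (h2 ▸ h1) hrank_lt
    exact absurd (hrmin _ ⟨T₁, hT₁B, hT₁0, rfl⟩) (Nat.not_le.mpr hrank₁)
  -- extract `y` and `φ` with `T x = φ x • y`
  rw [hr1] at hTr
  obtain ⟨⟨y, hyR⟩, hy0, hyspan⟩ := finrank_eq_one_iff'.mp hTr
  have hy : y ≠ 0 := fun h => hy0 (Subtype.ext h)
  have hRy : LinearMap.range T = span K {y} := by
    apply le_antisymm
    · intro z hz
      obtain ⟨c, hc⟩ := hyspan ⟨z, hz⟩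
      rw [Submodule.mem_span_singleton]
      exact ⟨c, congrArg Subtype.val hc⟩
    · rw [Submodule.span_singleton_le_iff_mem]; exact hyR
  set e := LinearEquiv.toSpanNonzeroSingleton K V y hy with he
  set φ : V →ₗ[K] K :=
    e.symm.toLinearMap ∘ₗ (LinearEquiv.ofEq _ _ hRy).toLinearMap ∘ₗ T.rangeRestrict with hφ
  have hTφ : ∀ x, T x = φ x • y := by
    intro x
    have h1 : e (φ x) = (LinearEquiv.ofEq _ _ hRy) (T.rangeRestrict x) := by
      simp [hφ]
    have h2 : (e (φ x) : V) = φ x • y := by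
      rw [he]; rfl
    have h3 : ((LinearEquiv.ofEq _ _ hRy) (T.rangeRestrict x) : V) = T x := rfl
    rw [← h3, ← h1, h2]
  have hφ0 : φ ≠ 0 := by
    intro h
    obtain ⟨x, hx⟩ : ∃ x, T x ≠ 0 := by
      by_contra hc; push_neg at hc; exact hT0 (LinearMap.ext fun x => hc x)
    apply hx
    rw [hTφ x, h]
    simp
  -- the functionals `φ ∘ g`, `g ∈ B`, fill up the whole dual space
  let ρ : B →ₗ[K] Module.Dual K V :=
    (LinearMap.llcomp K V V K φ) ∘ₗ (Subalgebra.toSubmodule B).subtype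
  set D : Submodule K (Module.Dual K V) := LinearMap.range ρ with hD
  have hDtop : D = ⊤ := by
    have hWinv : ∀ f ∈ B, ∀ u ∈ D.dualCoannihilator, f u ∈ D.dualCoannihilator := by
      intro f hf u hu
      rw [Submodule.mem_dualCoannihilator] at hu ⊢
      rintro _ ⟨⟨g, hg⟩, rfl⟩
      have := hu (ρ ⟨g * f, B.mul_mem hg hf⟩) ⟨_, rfl⟩
      exact this
    have hW : D.dualCoannihilator = ⊥ := by
      rcases hirr D.dualCoannihilator hWinv with h | h
      · exact h
      · exfalso
        obtain ⟨x, hx⟩ : ∃ x, φ x ≠ 0 := by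
          by_contra hc; push_neg at hc; exact hφ0 (LinearMap.ext fun x => hc x)
        have hxW : x ∈ D.dualCoannihilator := h ▸ mem_top
        rw [Submodule.mem_dualCoannihilator] at hxW
        exact hx (by simpa using hxW (φ ∘ₗ (1 : Module.End K V)) ⟨⟨1, B.one_mem⟩, rfl⟩)
    have hfr := Subspace.finrank_add_finrank_dualCoannihilator_eq D
    rw [hW, finrank_bot] at hfr
    apply Submodule.eq_top_of_finrank_eq
    rw [Subspace.dual_finrank_eq]
    omega
  -- every rank-one map `x ↦ ψ x • u` lies in `B`
  have hrank1 : ∀ (ψ : Module.Dual K V) (u : V), ψ.smulRight u ∈ B := by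
    intro ψ u
    have hψD : ψ ∈ D := hDtop ▸ mem_top
    obtain ⟨⟨g, hgB⟩, hgψ⟩ := hψD
    obtain ⟨f, hfB, hfy⟩ := orbit y hy u
    have : f * T * g ∈ B := B.mul_mem (B.mul_mem hfB hTB) hgB
    convert this using 1
    apply LinearMap.ext
    intro x
    have : (f * T * g) x = f (T (g x)) := rfl
    rw [LinearMap.smulRight_apply, this, hTφ (g x), map_smul, hfy, ← hgψ]
    rfl
  -- conclude: every endomorphism is a sum of rank-one maps
  rw [eq_top_iff]
  intro F _
  have hFsum : F = ∑ j : Fin n,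
      (LinearMap.proj j : V →ₗ[K] K).smulRight (F fun k => if j = k then 1 else 0) := by
    apply LinearMap.ext
    intro x
    rw [LinearMap.pi_apply_eq_sum_univ F x]
    simp [LinearMap.smulRight_apply]
  rw [hFsum]
  exact Subalgebra.sum_mem B fun j _ => hrank1 _ _

end Burnside

theorem stmt_8 (K : Type*) [Field K] [IsAlgClosed K] (n : ℕ) (hn : 1 ≤ n)
    (A : Subalgebra K (Matrix (Fin n) (Fin n) K))
    (hirr : ∀ U : Submodule K (Fin n → K),
      (∀ M ∈ A, ∀ u ∈ U, M.mulVec u ∈ U) → U = ⊥ ∨ U = ⊤) :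
    A = ⊤ := by
  set e := Matrix.toLinAlgEquiv' (R := K) (n := Fin n) with he
  set B : Subalgebra K (Module.End K (Fin n → K)) := A.map e.toAlgHom with hB
  have hBtop : B = ⊤ := by
    apply burnside_end hn
    intro U hU
    apply hirr U
    intro M hM u hu
    have : e M ∈ B := ⟨M, hM, rfl⟩
    have h2 := hU (e M) this u hu
    simpa [he, Matrix.toLinAlgEquiv'_apply] using h2
  rw [eq_top_iff]
  intro M _
  have : e M ∈ B := hBtop ▸ Submodule.mem_top (R := K)
  obtain ⟨M', hM', hMM⟩ := this
  have : M' = M := e.injective hMM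
  rwa [← this]
end

section
/- Let K be an algebraically closed field and n ≥ 2. If A is a proper unital K-subalgebra of K^{n,n} (i.e., A contains the identity matrix, is closed under addition, scalar multiplication and matrix multiplication, and A ≠ K^{n,n}), then dim(A) ≤ n² − n + 1. -/
open Module LinearMap

section Burnside

variable {K V : Type*} [Field K] [IsAlgClosed K] [AddCommGroup V] [Module K V]
  [FiniteDimensional K V]

/-- Orbit lemma: under an irreducibly-acting subalgebra, every nonzero vector reaches every
vector. -/
lemma aux_orbit (B : Subalgebra K (Module.End K V))
    (hirr : ∀ W : Submodule K V, (∀ f ∈ B, ∀ x ∈ W, f x ∈ W) → W = ⊥ ∨ W = ⊤)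
    {v : V} (hv : v ≠ 0) (u : V) : ∃ f ∈ B, f v = u := by
  let W : Submodule K V :=
    { carrier := {u | ∃ f ∈ B, f v = u}
      add_mem' := by rintro a b ⟨f, hf, rfl⟩ ⟨g, hg, rfl⟩; exact ⟨f + g, B.add_mem hf hg, rfl⟩
      zero_mem' := ⟨0, B.zero_mem, rfl⟩
      smul_mem' := by rintro c a ⟨f, hf, rfl⟩; exact ⟨c • f, B.smul_mem hf c, rfl⟩ }
  have hWinv : ∀ f ∈ B, ∀ x ∈ W, f x ∈ W := by
    rintro g hg x ⟨f, hf, rfl⟩; exact ⟨g * f, B.mul_mem hg hf, rfl⟩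
  have hWtop : W = ⊤ := by
    rcases hirr W hWinv with h | h
    · exfalso
      have hvW : v ∈ W := ⟨1, B.one_mem, rfl⟩
      rw [h] at hvW
      exact hv (Submodule.mem_bot K |>.mp hvW)
    · exact h
  have : u ∈ W := hWtop ▸ Submodule.mem_top
  exact this

/-- Existence of a rank-one element. -/
lemma aux_rank_one [Nontrivial V] (B : Subalgebra K (Module.End K V))
    (hirr : ∀ W : Submodule K V, (∀ f ∈ B, ∀ x ∈ W, f x ∈ W) → W = ⊥ ∨ W = ⊤) :
    ∃ T ∈ B, Module.finrank K (LinearMap.range T) = 1 := by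
  have h1 : (1 : Module.End K V) ≠ 0 := by
    obtain ⟨x, hx⟩ := exists_ne (0 : V)
    intro h
    exact hx (by calc x = (1 : Module.End K V) x := rfl
                     _ = (0 : Module.End K V) x := by rw [h]
                     _ = 0 := rfl)
  set s : Set ℕ := {r | ∃ T ∈ B, T ≠ 0 ∧ Module.finrank K (LinearMap.range T) = r} with hs_def
  have hs : s.Nonempty := ⟨_, 1, B.one_mem, h1, rfl⟩
  obtain ⟨T, hTB, hT0, hTr⟩ := Nat.sInf_mem hs
  set r := sInf s with hr_def
  have hr1 : 1 ≤ r := by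
    rw [Nat.one_le_iff_ne_zero]
    intro h
    rw [h, Submodule.finrank_eq_zero] at hTr
    exact hT0 (LinearMap.range_eq_bot.mp hTr)
  refine ⟨T, hTB, ?_⟩
  rw [hTr]
  by_contra hne
  have hr2 : 2 ≤ r := by omega
  obtain ⟨u1, hu1⟩ : ∃ u, T u ≠ 0 := by
    by_contra h; push_neg at h; exact hT0 (LinearMap.ext h)
  set w1 := T u1 with hw1_def
  have hnotle : ¬ (LinearMap.range T ≤ K ∙ w1) := by
    intro hle
    have h2 := Submodule.finrank_mono hle
    rw [hTr, finrank_span_singleton hu1] at h2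
    omega
  obtain ⟨w2, hw2r, hw2⟩ := SetLike.not_le_iff_exists.mp hnotle
  obtain ⟨u2, rfl⟩ := hw2r
  obtain ⟨S, hSB, hS⟩ := aux_orbit B hirr hu1 u2
  -- T*S maps range T into itself
  have hmap : ∀ x ∈ LinearMap.range T, (T * S) x ∈ LinearMap.range T := by
    rintro x -; exact ⟨S x, rfl⟩
  let g : LinearMap.range T →ₗ[K] LinearMap.range T := LinearMap.restrict (T * S) hmap
  have hrT : Nontrivial (LinearMap.range T) := by
    apply Submodule.nontrivial_iff_ne_bot.mpr
    intro h; exact hT0 (LinearMap.range_eq_bot.mp h)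
  obtain ⟨μ, hμ⟩ := Module.End.exists_eigenvalue g
  obtain ⟨⟨w, hwmem⟩, hwv⟩ := hμ.exists_hasEigenvector
  have hweq : (T * S) w = μ • w := by
    have := hwv.apply_eq_smul
    have h2 := congrArg (Subtype.val) this
    simpa [g, LinearMap.restrict_apply] using h2
  have hwne : w ≠ 0 := by
    intro h
    apply hwv.right
    rw [Submodule.mk_eq_zero]
    exact h
  set h : Module.End K V := T * S - μ • 1 with hh_def
  set T' : Module.End K V := h * T with hT'_def
  have hT'B : T' ∈ B :=
    B.mul_mem (B.sub_mem (B.mul_mem hTB hSB) (B.smul_mem B.one_mem μ)) hTB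
  have hT'u1 : T' u1 = T u2 - μ • w1 := by
    show h (T u1) = T u2 - μ • w1
    rw [hh_def]
    simp only [LinearMap.sub_apply, LinearMap.smul_apply, Module.End.one_apply]
    congr 1
    show T (S (T u1)) = T u2
    rw [← hw1_def, hS]
  have hT'0 : T' ≠ 0 := by
    intro h0
    apply hw2
    have h3 : T u2 - μ • w1 = 0 := by rw [← hT'u1, h0]; rfl
    have h4 : T u2 = μ • w1 := by
      rwa [sub_eq_zero] at h3
    rw [h4]
    exact Submodule.smul_mem _ μ (Submodule.mem_span_singleton_self w1)
  -- q : range T → V, restriction of h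
  let q : LinearMap.range T →ₗ[K] V := h ∘ₗ (LinearMap.range T).subtype
  have hkerq : (⟨w, hwmem⟩ : LinearMap.range T) ∈ LinearMap.ker q := by
    rw [LinearMap.mem_ker]
    show h w = 0
    rw [hh_def]
    simp only [LinearMap.sub_apply, LinearMap.smul_apply, Module.End.one_apply]
    rw [hweq, sub_self]
  have hkerq_ne : LinearMap.ker q ≠ ⊥ := by
    intro hbot
    rw [hbot, Submodule.mem_bot] at hkerq
    exact hwne (congrArg Subtype.val hkerq)
  have hkerq_pos : 1 ≤ Module.finrank K (LinearMap.ker q) := by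
    rw [Nat.one_le_iff_ne_zero]
    intro h0
    exact hkerq_ne (Submodule.finrank_eq_zero.mp h0)
  have hqrank := LinearMap.finrank_range_add_finrank_ker q
  rw [hTr] at hqrank
  have hrangeT' : LinearMap.range T' ≤ LinearMap.range q := by
    rintro x ⟨y, rfl⟩
    exact ⟨⟨T y, ⟨y, rfl⟩⟩, rfl⟩
  have hlt : Module.finrank K (LinearMap.range T') < r := by
    have := Submodule.finrank_mono hrangeT'
    omega
  have : r ≤ Module.finrank K (LinearMap.range T') :=
    Nat.sInf_le ⟨T', hT'B, hT'0, rfl⟩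
  omega

/-- Burnside's theorem: a subalgebra of endomorphisms acting irreducibly on a nontrivial
finite dimensional space over an algebraically closed field is everything. -/
lemma aux_burnside (B : Subalgebra K (Module.End K V))
    (hirr : ∀ W : Submodule K V, (∀ f ∈ B, ∀ x ∈ W, f x ∈ W) → W = ⊥ ∨ W = ⊤) :
    B = ⊤ := by
  rcases subsingleton_or_nontrivial V with hV | hV
  · have : Subsingleton (Module.End K V) := by
      constructor; intro a b; ext x; exact Subsingleton.elim _ _
    exact Subsingleton.elim _ _
  obtain ⟨T, hTB, hTr⟩ := aux_rank_one B hirr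
  -- get generator of range T
  have hrT : Nontrivial (LinearMap.range T) := by
    apply Submodule.nontrivial_iff_ne_bot.mpr
    intro hbot
    rw [hbot] at hTr
    simp at hTr
  obtain ⟨w0', hw0'⟩ := exists_ne (0 : LinearMap.range T)
  set w0 : V := (w0' : V) with hw0_def
  have hw0mem : w0 ∈ LinearMap.range T := w0'.2
  have hw0 : w0 ≠ 0 := fun h => hw0' (Subtype.ext h)
  have hspan : LinearMap.range T = K ∙ w0 := by
    symm
    apply Submodule.eq_of_le_of_finrank_le
    · rwa [Submodule.span_singleton_le_iff_mem]
    · rw [hTr, finrank_span_singleton hw0]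
  -- f : V →ₗ K coordinate functional
  have hTmem : ∀ x, T x ∈ K ∙ w0 := fun x => hspan ▸ LinearMap.mem_range_self T x
  let e := LinearEquiv.toSpanNonzeroSingleton K V w0 hw0
  let f : V →ₗ[K] K := e.symm.toLinearMap ∘ₗ T.codRestrict (K ∙ w0) hTmem
  have hf : ∀ x, f x • w0 = T x := by
    intro x
    have : e (f x) = T.codRestrict (K ∙ w0) hTmem x := by
      show e (e.symm _) = _
      rw [LinearEquiv.apply_symm_apply]
    have h2 := congrArg Subtype.val this
    rwa [LinearEquiv.toSpanNonzeroSingleton_apply] at h2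
  have hT0 : T ≠ 0 := by
    intro h0
    rw [h0, LinearMap.range_zero, finrank_bot] at hTr
    exact absurd hTr (by norm_num)
  obtain ⟨x0, hx0⟩ : ∃ x, T x ≠ 0 := by
    by_contra h; push_neg at h; exact hT0 (LinearMap.ext h)
  have hfx0 : f x0 ≠ 0 := by
    intro h0; apply hx0; rw [← hf x0, h0, zero_smul]
  -- The submodule U of common zeros
  let U : Submodule K V :=
    { carrier := {x | ∀ b ∈ B, f (b x) = 0}
      add_mem' := by
        intro a b ha hb c hc
        rw [map_add, map_add, ha c hc, hb c hc, add_zero]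
      zero_mem' := by intro c hc; rw [map_zero, map_zero]
      smul_mem' := by
        intro c a ha b hb
        rw [map_smul, map_smul, ha b hb, smul_zero] }
  have hUinv : ∀ g ∈ B, ∀ x ∈ U, g x ∈ U := by
    intro g hg x hx b hb
    exact hx (b * g) (B.mul_mem hb hg)
  have hUne : U ≠ ⊤ := by
    intro htop
    have : x0 ∈ U := htop ▸ Submodule.mem_top
    exact hfx0 (by simpa using this 1 B.one_mem)
  have hUbot : U = ⊥ := (hirr U hUinv).resolve_right hUne
  -- The subspace D of the dual
  let D : Submodule K (V →ₗ[K] K) :=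
    { carrier := {g | ∃ b ∈ B, f ∘ₗ b = g}
      add_mem' := by
        rintro g1 g2 ⟨b1, hb1, rfl⟩ ⟨b2, hb2, rfl⟩
        exact ⟨b1 + b2, B.add_mem hb1 hb2, by ext x; simp⟩
      zero_mem' := ⟨0, B.zero_mem, by ext x; simp⟩
      smul_mem' := by
        rintro c g ⟨b, hb, rfl⟩
        exact ⟨c • b, B.smul_mem hb c, by ext x; simp⟩ }
  have hDcoann : D.dualCoannihilator = ⊥ := by
    rw [← hUbot]
    ext x
    rw [Submodule.mem_dualCoannihilator]
    constructor
    · intro hx b hb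
      exact hx (f ∘ₗ b) ⟨b, hb, rfl⟩
    · rintro hx g ⟨b, hb, rfl⟩
      exact hx b hb
  have hDtop : D = ⊤ := by
    have h1 := Subspace.dualCoannihilator_dualAnnihilator_eq (W := D)
    rw [hDcoann, Submodule.dualAnnihilator_bot] at h1
    exact h1.symm
  -- all rank ≤ 1 maps belong to B
  have key : ∀ (g : V →ₗ[K] K) (u : V), g.smulRight u ∈ B := by
    intro g u
    have hg : g ∈ D := hDtop ▸ Submodule.mem_top
    obtain ⟨b, hb, rfl⟩ := hg
    obtain ⟨a, ha, rfl⟩ := aux_orbit B hirr hw0 u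
    have : (f ∘ₗ b).smulRight (a w0) = a * T * b := by
      ext x
      show f (b x) • a w0 = a (T (b x))
      rw [← hf (b x), map_smul]
    rw [this]
    exact B.mul_mem (B.mul_mem ha hTB) hb
  -- conclude
  rw [eq_top_iff]
  rintro φ -
  let bas := Module.finBasis K V
  have hφ : φ = ∑ i, (bas.coord i).smulRight (φ (bas i)) := by
    ext x
    rw [LinearMap.sum_apply]
    simp only [LinearMap.smulRight_apply, Basis.coord_apply]
    conv_lhs => rw [← bas.sum_repr x]
    rw [map_sum]
    simp only [map_smul]
  rw [hφ]
  exact Subalgebra.sum_mem _ (fun i _ => key _ _)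

end Burnside

theorem stmt_9 (K : Type*) [Field K] [IsAlgClosed K] (n : ℕ) (hn : 2 ≤ n)
    (A : Subalgebra K (Matrix (Fin n) (Fin n) K))
    (hproper : A ≠ ⊤) :
    Module.finrank K A ≤ n ^ 2 - n + 1 := by
  classical
  set V := Fin n → K with hV_def
  let e : Matrix (Fin n) (Fin n) K ≃ₐ[K] Module.End K V := Matrix.toLinAlgEquiv'
  let B : Subalgebra K (Module.End K V) := A.map (e : Matrix (Fin n) (Fin n) K →ₐ[K] _)
  have hBne : B ≠ ⊤ := by
    intro h
    apply hproper
    have hmt : Subalgebra.map (e : Matrix (Fin n) (Fin n) K →ₐ[K] Module.End K V) ⊤ = ⊤ := by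
      rw [Algebra.map_top]
      exact (AlgHom.range_eq_top _).mpr e.surjective
    exact Subalgebra.map_injective e.injective (h.trans hmt.symm)
  have hdim : Module.finrank K A = Module.finrank K B :=
    LinearEquiv.finrank_eq (e.subalgebraMap A).toLinearEquiv
  have hnirr : ¬ (∀ W : Submodule K V, (∀ f ∈ B, ∀ x ∈ W, f x ∈ W) → W = ⊥ ∨ W = ⊤) :=
    fun h => hBne (aux_burnside B h)
  push_neg at hnirr
  obtain ⟨W, hWinv, hWbot, hWtop⟩ := hnirr
  set k := Module.finrank K W with hk_def
  have hVn : Module.finrank K V = n := Module.finrank_fin_fun K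
  have hk1 : 1 ≤ k := by
    rw [hk_def, Nat.one_le_iff_ne_zero]
    intro h0
    exact hWbot (Submodule.finrank_eq_zero.mp h0)
  have hkn : k < n := hVn ▸ Submodule.finrank_lt hWtop
  let Φ : Module.End K V →ₗ[K] (W →ₗ[K] V ⧸ W) :=
    { toFun := fun f => W.mkQ ∘ₗ f ∘ₗ W.subtype
      map_add' := by intros; ext; simp
      map_smul' := by intros; ext; simp }
  have hker : Subalgebra.toSubmodule B ≤ LinearMap.ker Φ := by
    intro f hf
    rw [LinearMap.mem_ker]
    ext ⟨x, hx⟩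
    show W.mkQ (f x) = 0
    rw [Submodule.mkQ_apply, Submodule.Quotient.mk_eq_zero]
    exact hWinv f hf x hx
  have hsurj : Function.Surjective Φ := by
    obtain ⟨U, hU⟩ := Submodule.exists_isCompl W
    obtain ⟨s, hs⟩ := W.mkQ.exists_rightInverse_of_surjective (Submodule.range_mkQ W)
    intro g
    refine ⟨s ∘ₗ g ∘ₗ (W.projectionOnto U hU), ?_⟩
    ext x
    show W.mkQ (s (g (W.projectionOnto U hU x))) = g x
    rw [Submodule.projectionOnto_apply_left hU x]
    have : W.mkQ (s (g x)) = (W.mkQ ∘ₗ s) (g x) := rfl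
    rw [this, hs]
    rfl
  have hquot : Module.finrank K (V ⧸ W) = n - k := by
    have := Submodule.finrank_quotient_add_finrank W
    rw [hVn] at this
    omega
  have hrange : Module.finrank K (LinearMap.range Φ) = k * (n - k) := by
    rw [LinearMap.range_eq_top.mpr hsurj]
    rw [finrank_top, Module.finrank_linearMap, hquot]
  have hrk := LinearMap.finrank_range_add_finrank_ker Φ
  rw [hrange, Module.finrank_linearMap, hVn] at hrk
  have hA : Module.finrank K A ≤ Module.finrank K (LinearMap.ker Φ) := by
    rw [hdim]
    exact Submodule.finrank_mono hker
  -- arithmetic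
  obtain ⟨a, ha⟩ : ∃ a, k = a + 1 := ⟨k - 1, by omega⟩
  obtain ⟨c, hc⟩ : ∃ c, n - k = c + 1 := ⟨n - k - 1, by omega⟩
  have hn_eq : n = a + c + 2 := by omega
  have hexp : k * (n - k) = a * c + a + c + 1 := by rw [hc, ha]; ring
  have hsq : n ^ 2 = n * n := sq n
  have : Module.finrank K (LinearMap.ker Φ) + n ≤ n * n + 1 := by
    rw [← hrk, hexp]
    omega
  omega
end
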